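/- Let x0 ∈ ℝ³ and 0 < ρ0 < ρ1 < ρ. Let ψ ∈ C_c^∞(ℝ³; ℝ) with supp ψ ⊂ B(x0, ρ) and ∇ψ(x) = 0 for every x ∈ B(x0, ρ1). Let u ∈ L²(ℝ³; ℝ³). Define β : B(x0, ρ0) → ℝ³ by β(x) := (1/4π) ∫_{ℝ³} ((x − y)/|x − y|³) ( u(y) · ∇ψ(y) ) dy − (1/4π) ∫_{ℝ³} ((x − y)/|x − y|³) ∧ ( ∇ψ(y) ∧ u(y) ) dy; both integrals converge absolutely, since the integrands vanish unless ρ1 ≤ |y − x0| < ρ, so that |x − y| ≥ ρ1 − ρ0 for x ∈ B(x0, ρ0). Then there exists a constant C > 0 depending only on ρ0, ρ1, ρ such that β is Lipschitz on B(x0, ρ0) with Lipschitz constant at most C ‖∇ψ‖_{L²(B(x0,ρ))} ‖u‖_{L²(B(x0,ρ))}. -/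

import Mathlib

open MeasureTheory Filter Metric
open scoped Topology RealInnerProductSpace ENNReal

noncomputable section

abbrev E3 : Type := EuclideanSpace ℝ (Fin 3)

/-- The cross product of two vectors in `ℝ³`. -/
def cross3 (a b : E3) : E3 :=
  (EuclideanSpace.equiv (Fin 3) ℝ).symm
    ![a 1 * b 2 - a 2 * b 1, a 2 * b 0 - a 0 * b 2, a 0 * b 1 - a 1 * b 0]

lemma cross3_apply (a b : E3) (i : Fin 3) :
    cross3 a b i = ![a 1 * b 2 - a 2 * b 1, a 2 * b 0 - a 0 * b 2, a 0 * b 1 - a 1 * b 0] i := rfl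

lemma norm_E3 (a : E3) : ‖a‖ = Real.sqrt (a 0 ^ 2 + a 1 ^ 2 + a 2 ^ 2) := by
  rw [EuclideanSpace.norm_eq]
  simp [Fin.sum_univ_three, Real.norm_eq_abs, sq_abs]

lemma norm_cross3_le (a b : E3) : ‖cross3 a b‖ ≤ ‖a‖ * ‖b‖ := by
  rw [norm_E3, norm_E3, norm_E3, ← Real.sqrt_mul (by positivity)]
  apply Real.sqrt_le_sqrt
  simp only [cross3_apply]
  simp only [Matrix.cons_val_zero, Matrix.cons_val_one, Matrix.head_cons,
    Matrix.cons_val_two, Matrix.tail_cons]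
  nlinarith [sq_nonneg (a 0 * b 0 + a 1 * b 1 + a 2 * b 2)]

lemma cross3_sub_left (a a' b : E3) : cross3 (a - a') b = cross3 a b - cross3 a' b := by
  ext i
  fin_cases i <;>
    simp [cross3_apply, PiLp.sub_apply] <;> ring

lemma cross3_zero_left (b : E3) : cross3 0 b = 0 := by
  ext i
  fin_cases i <;> simp [cross3_apply]

lemma continuous_cross3 : Continuous (fun p : E3 × E3 => cross3 p.1 p.2) := by
  unfold cross3
  refine (EuclideanSpace.equiv (Fin 3) ℝ).symm.continuous.comp ?_
  refine continuous_pi fun i => ?_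
  have h : ∀ j : Fin 3, Continuous fun p : E3 × E3 => p.1 j :=
    fun j => (EuclideanSpace.proj j).continuous.comp continuous_fst
  have h2 : ∀ j : Fin 3, Continuous fun p : E3 × E3 => p.2 j :=
    fun j => (EuclideanSpace.proj j).continuous.comp continuous_snd
  fin_cases i
  · exact ((h 1).mul (h2 2)).sub ((h 2).mul (h2 1))
  · exact ((h 2).mul (h2 0)).sub ((h 0).mul (h2 2))
  · exact ((h 0).mul (h2 1)).sub ((h 1).mul (h2 0))

lemma continuous_cross3' : Continuous (Function.uncurry cross3) := continuous_cross3

/-- Lipschitz estimate for the Newton kernel away from the singularity. -/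
lemma kernel_lip {d R : ℝ} (hd : 0 < d) (a b : E3)
    (had : d ≤ ‖a‖) (hbd : d ≤ ‖b‖) (haR : ‖a‖ ≤ R) (hbR : ‖b‖ ≤ R) :
    ‖(‖a‖ ^ 3)⁻¹ • a - (‖b‖ ^ 3)⁻¹ • b‖ ≤ ((d ^ 3)⁻¹ + 3 * R ^ 3 / (d ^ 3 * d ^ 3)) * ‖a - b‖ := by
  have ha0 : (0:ℝ) < ‖a‖ := lt_of_lt_of_le hd had
  have hb0 : (0:ℝ) < ‖b‖ := lt_of_lt_of_le hd hbd
  have hR0 : (0:ℝ) < R := ha0.trans_le haR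
  have hsplit : (‖a‖ ^ 3)⁻¹ • a - (‖b‖ ^ 3)⁻¹ • b
      = (‖a‖ ^ 3)⁻¹ • (a - b) + ((‖a‖ ^ 3)⁻¹ - (‖b‖ ^ 3)⁻¹) • b := by
    module
  rw [hsplit]
  refine (norm_add_le _ _).trans ?_
  rw [norm_smul, norm_smul, Real.norm_eq_abs, Real.norm_eq_abs]
  have h1 : |(‖a‖ ^ 3)⁻¹| ≤ (d ^ 3)⁻¹ := by
    rw [abs_of_pos (by positivity)]
    exact inv_anti₀ (by positivity) (pow_le_pow_left₀ hd.le had 3)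
  have hnn : |‖b‖ - ‖a‖| ≤ ‖a - b‖ := by
    rw [abs_sub_comm]; exact abs_norm_sub_norm_le a b
  have h2 : |(‖a‖ ^ 3)⁻¹ - (‖b‖ ^ 3)⁻¹| ≤ 3 * R ^ 2 * ‖a - b‖ / (d ^ 3 * d ^ 3) := by
    have heq : (‖a‖ ^ 3)⁻¹ - (‖b‖ ^ 3)⁻¹ = (‖b‖ ^ 3 - ‖a‖ ^ 3) / (‖a‖ ^ 3 * ‖b‖ ^ 3) := by
      field_simp
    rw [heq, abs_div]
    have hnum : |‖b‖ ^ 3 - ‖a‖ ^ 3| ≤ 3 * R ^ 2 * ‖a - b‖ := by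
      have : ‖b‖ ^ 3 - ‖a‖ ^ 3 = (‖b‖ - ‖a‖) * (‖b‖ ^ 2 + ‖b‖ * ‖a‖ + ‖a‖ ^ 2) := by ring
      rw [this, abs_mul]
      have hfac : |‖b‖ ^ 2 + ‖b‖ * ‖a‖ + ‖a‖ ^ 2| ≤ 3 * R ^ 2 := by
        rw [abs_of_pos (by positivity)]; nlinarith
      calc |‖b‖ - ‖a‖| * |‖b‖ ^ 2 + ‖b‖ * ‖a‖ + ‖a‖ ^ 2|
          ≤ ‖a - b‖ * (3 * R ^ 2) := by
            exact mul_le_mul hnn hfac (abs_nonneg _) (norm_nonneg _)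
        _ = 3 * R ^ 2 * ‖a - b‖ := by ring
    have hden : d ^ 3 * d ^ 3 ≤ |‖a‖ ^ 3 * ‖b‖ ^ 3| := by
      rw [abs_of_pos (by positivity)]
      have q1 := pow_le_pow_left₀ hd.le had 3
      have q2 := pow_le_pow_left₀ hd.le hbd 3
      nlinarith [pow_pos hd 3]
    calc |‖b‖ ^ 3 - ‖a‖ ^ 3| / |‖a‖ ^ 3 * ‖b‖ ^ 3|
        ≤ (3 * R ^ 2 * ‖a - b‖) / (d ^ 3 * d ^ 3) :=
          div_le_div₀ (by positivity) hnum (by positivity) hden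
      _ = 3 * R ^ 2 * ‖a - b‖ / (d ^ 3 * d ^ 3) := rfl
  have hfin : |(‖a‖ ^ 3)⁻¹ - (‖b‖ ^ 3)⁻¹| * ‖b‖ ≤ 3 * R ^ 3 / (d ^ 3 * d ^ 3) * ‖a - b‖ := by
    calc |(‖a‖ ^ 3)⁻¹ - (‖b‖ ^ 3)⁻¹| * ‖b‖
        ≤ (3 * R ^ 2 * ‖a - b‖ / (d ^ 3 * d ^ 3)) * R := by
          exact mul_le_mul h2 hbR (norm_nonneg _) (by positivity)
      _ = 3 * R ^ 3 / (d ^ 3 * d ^ 3) * ‖a - b‖ := by ring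
  have h1' : |(‖a‖ ^ 3)⁻¹| * ‖a - b‖ ≤ (d ^ 3)⁻¹ * ‖a - b‖ :=
    mul_le_mul_of_nonneg_right h1 (norm_nonneg _)
  calc |(‖a‖ ^ 3)⁻¹| * ‖a - b‖ + |(‖a‖ ^ 3)⁻¹ - (‖b‖ ^ 3)⁻¹| * ‖b‖
      ≤ (d ^ 3)⁻¹ * ‖a - b‖ + 3 * R ^ 3 / (d ^ 3 * d ^ 3) * ‖a - b‖ := add_le_add h1' hfin
    _ = ((d ^ 3)⁻¹ + 3 * R ^ 3 / (d ^ 3 * d ^ 3)) * ‖a - b‖ := by ring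

lemma cross3_zero_right (a : E3) : cross3 a 0 = 0 := by
  ext i
  fin_cases i <;> simp [cross3_apply]

/-- The harmonic corrector
`β(x) = (1/4π) ∫ ((x-y)/|x-y|³) (u(y)·∇ψ(y)) dy - (1/4π) ∫ ((x-y)/|x-y|³) ∧ (∇ψ(y) ∧ u(y)) dy`. -/
def harmCorr (ψ : E3 → ℝ) (u : E3 → E3) (x : E3) : E3 :=
  (4 * Real.pi)⁻¹ •
      (∫ y : E3, ((‖x - y‖ ^ 3)⁻¹ * ⟪u y, gradient ψ y⟫) • (x - y))
    - (4 * Real.pi)⁻¹ •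
      (∫ y : E3, cross3 ((‖x - y‖ ^ 3)⁻¹ • (x - y)) (cross3 (gradient ψ y) (u y)))

set_option maxHeartbeats 2000000

/-- Proposition `Lemma_correctors` of the paper (stationary form): the harmonic
corrector `β` is Lipschitz on `B(x0, ρ0)` with constant
`C ‖∇ψ‖_{L²(B(x0,ρ))} ‖u‖_{L²(B(x0,ρ))}`, `C` depending only on `ρ0, ρ1, ρ`. -/
theorem harmCorr_lipschitzOnWith
    (ρ0 ρ1 ρ : ℝ) (h0 : 0 < ρ0) (h1 : ρ0 < ρ1) (h2 : ρ1 < ρ) :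
    ∃ C > (0 : ℝ),
      ∀ (x0 : E3) (ψ : E3 → ℝ) (u : E3 → E3),
        ContDiff ℝ (⊤ : ℕ∞) ψ → HasCompactSupport ψ →
        tsupport ψ ⊆ Metric.ball x0 ρ →
        (∀ x ∈ Metric.ball x0 ρ1, gradient ψ x = 0) →
        MemLp u 2 (volume : Measure E3) →
        (∀ x ∈ Metric.ball x0 ρ0,
            Integrable (fun y : E3 => ((‖x - y‖ ^ 3)⁻¹ * ⟪u y, gradient ψ y⟫) • (x - y)) ∧
            Integrable (fun y : E3 =>
              cross3 ((‖x - y‖ ^ 3)⁻¹ • (x - y)) (cross3 (gradient ψ y) (u y)))) ∧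
        LipschitzOnWith
          (Real.toNNReal (C
            * (∫ y in Metric.ball x0 ρ, ‖gradient ψ y‖ ^ 2) ^ ((1 : ℝ) / 2)
            * (∫ y in Metric.ball x0 ρ, ‖u y‖ ^ 2) ^ ((1 : ℝ) / 2)))
          (harmCorr ψ u) (Metric.ball x0 ρ0) := by
  have hd : (0:ℝ) < ρ1 - ρ0 := sub_pos.mpr h1
  set d : ℝ := ρ1 - ρ0 with hd_def
  set R : ℝ := ρ + ρ0 with hR_def
  have hR : (0:ℝ) < R := by
    have : (0:ℝ) < ρ := h0.trans (h1.trans h2)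
    positivity
  set L : ℝ := (d ^ 3)⁻¹ + 3 * R ^ 3 / (d ^ 3 * d ^ 3) with hL_def
  have hL : (0:ℝ) < L := by positivity
  have hπ : (0:ℝ) < (4 * Real.pi)⁻¹ := by
    have := Real.pi_pos; positivity
  refine ⟨(4 * Real.pi)⁻¹ * (2 * L), by positivity, ?_⟩
  intro x0 ψ u hψ hcs hsupp hgrad hu
  set C : ℝ := (4 * Real.pi)⁻¹ * (2 * L) with hC_def
  have hC : (0:ℝ) < C := by positivity
  -- continuity of the gradient
  have hgradc : Continuous (gradient ψ) := by
    have h1' : Continuous (fderiv ℝ ψ) := hψ.continuous_fderiv (by simp)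
    exact (InnerProductSpace.toDual ℝ E3).symm.continuous.comp h1'
  -- gradient vanishes off tsupport
  have hgrad0 : ∀ y, y ∉ tsupport ψ → gradient ψ y = 0 := by
    intro y hy
    have hf : fderiv ℝ ψ y = 0 := by
      by_contra h
      exact hy (support_fderiv_subset ℝ (by simpa [Function.mem_support] using h))
    show (InnerProductSpace.toDual ℝ E3).symm (fderiv ℝ ψ y) = 0
    rw [hf]; simp
  -- effective support of the gradient
  have hsupp' : ∀ y : E3, gradient ψ y ≠ 0 →
      y ∈ Metric.ball x0 ρ ∧ y ∉ Metric.ball x0 ρ1 := by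
    intro y hy
    refine ⟨hsupp (by_contra fun h => hy (hgrad0 y h)), fun hmem => hy (hgrad y hmem)⟩
  -- compact support and L² membership of the gradient
  have hgradCS : HasCompactSupport (gradient ψ) := by
    refine hcs.mono' ?_
    intro y hy
    by_contra h
    exact hy (hgrad0 y h)
  have hMg : MemLp (gradient ψ) 2 (volume : Measure E3) :=
    hgradc.memLp_of_hasCompactSupport hgradCS
  -- the scalar majorant
  set g : E3 → ℝ := fun y => ‖gradient ψ y‖ * ‖u y‖ with hg_def
  have hgmeas : AEStronglyMeasurable g (volume : Measure E3) :=
    (hgradc.norm.aestronglyMeasurable).mul hu.1.norm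
  have hgnonneg : ∀ y, 0 ≤ g y := fun y => by positivity
  have hgint : Integrable g (volume : Measure E3) := by
    have hi1 : Integrable (fun y => ‖gradient ψ y‖ ^ 2) (volume : Measure E3) :=
      hMg.norm.integrable_sq
    have hi2 : Integrable (fun y => ‖u y‖ ^ 2) (volume : Measure E3) :=
      hu.norm.integrable_sq
    refine (hi1.add hi2).mono' hgmeas (ae_of_all _ fun y => ?_)
    rw [Real.norm_eq_abs, abs_of_nonneg (hgnonneg y)]
    simp only [hg_def, Pi.add_apply]
    nlinarith [sq_nonneg (‖gradient ψ y‖ - ‖u y‖), norm_nonneg (gradient ψ y),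
      norm_nonneg (u y)]
  -- distance bounds on the effective support
  have hK : ∀ x ∈ Metric.ball x0 ρ0, ∀ y : E3, gradient ψ y ≠ 0 →
      d ≤ ‖x - y‖ ∧ ‖x - y‖ ≤ R := by
    intro x hx y hy
    obtain ⟨hyρ, hyρ1⟩ := hsupp' y hy
    have hd1 : ρ1 ≤ dist y x0 := not_lt.mp (by simpa [Metric.mem_ball] using hyρ1)
    have hyρ' : dist y x0 < ρ := by simpa [Metric.mem_ball] using hyρ
    have hx0 : dist x x0 < ρ0 := by simpa [Metric.mem_ball] using hx
    have hxy : ‖x - y‖ = dist x y := (dist_eq_norm x y)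
    constructor
    · have htri : dist y x0 ≤ dist y x + dist x x0 := dist_triangle _ _ _
      have := dist_comm y x
      rw [hxy]; linarith [dist_comm y x]
    · have htri : dist x y ≤ dist x x0 + dist x0 y := dist_triangle _ _ _
      have := dist_comm x0 y
      rw [hxy]; linarith [dist_comm x0 y]
  -- pointwise bound for the first integrand
  have hbound1 : ∀ x ∈ Metric.ball x0 ρ0, ∀ y : E3,
      ‖((‖x - y‖ ^ 3)⁻¹ * ⟪u y, gradient ψ y⟫) • (x - y)‖ ≤ (d ^ 2)⁻¹ * g y := by
    intro x hx y
    by_cases hy : gradient ψ y = 0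
    · simp only [hy, inner_zero_right, mul_zero, zero_smul, norm_zero]
      positivity
    · obtain ⟨hd1, hd2⟩ := hK x hx y hy
      have hxy0 : (0:ℝ) < ‖x - y‖ := hd.trans_le hd1
      rw [norm_smul, Real.norm_eq_abs, abs_mul, abs_of_pos (by positivity)]
      have hinner : |⟪u y, gradient ψ y⟫| ≤ ‖u y‖ * ‖gradient ψ y‖ :=
        abs_real_inner_le_norm _ _
      have e1 : (‖x - y‖ ^ 3)⁻¹ * ‖x - y‖ = (‖x - y‖ ^ 2)⁻¹ := by
        field_simp
      have e2 : (‖x - y‖ ^ 2)⁻¹ ≤ (d ^ 2)⁻¹ :=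
        inv_anti₀ (by positivity) (by nlinarith)
      calc (‖x - y‖ ^ 3)⁻¹ * |⟪u y, gradient ψ y⟫| * ‖x - y‖
          = ((‖x - y‖ ^ 3)⁻¹ * ‖x - y‖) * |⟪u y, gradient ψ y⟫| := by ring
        _ = (‖x - y‖ ^ 2)⁻¹ * |⟪u y, gradient ψ y⟫| := by rw [e1]
        _ ≤ (d ^ 2)⁻¹ * (‖u y‖ * ‖gradient ψ y‖) :=
            mul_le_mul e2 hinner (abs_nonneg _) (by positivity)
        _ = (d ^ 2)⁻¹ * g y := by rw [hg_def]; ring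
  -- pointwise bound for the second integrand
  have hbound2 : ∀ x ∈ Metric.ball x0 ρ0, ∀ y : E3,
      ‖cross3 ((‖x - y‖ ^ 3)⁻¹ • (x - y)) (cross3 (gradient ψ y) (u y))‖
        ≤ (d ^ 2)⁻¹ * g y := by
    intro x hx y
    by_cases hy : gradient ψ y = 0
    · simp only [hy, cross3_zero_left, cross3_zero_right, norm_zero]
      positivity
    · obtain ⟨hd1, hd2⟩ := hK x hx y hy
      have hxy0 : (0:ℝ) < ‖x - y‖ := hd.trans_le hd1
      have e1 : ‖(‖x - y‖ ^ 3)⁻¹ • (x - y)‖ = (‖x - y‖ ^ 2)⁻¹ := by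
        rw [norm_smul, Real.norm_eq_abs, abs_of_pos (by positivity)]
        field_simp
      have e2 : (‖x - y‖ ^ 2)⁻¹ ≤ (d ^ 2)⁻¹ :=
        inv_anti₀ (by positivity) (by nlinarith)
      calc ‖cross3 ((‖x - y‖ ^ 3)⁻¹ • (x - y)) (cross3 (gradient ψ y) (u y))‖
          ≤ ‖(‖x - y‖ ^ 3)⁻¹ • (x - y)‖ * ‖cross3 (gradient ψ y) (u y)‖ :=
            norm_cross3_le _ _
        _ ≤ ‖(‖x - y‖ ^ 3)⁻¹ • (x - y)‖ * (‖gradient ψ y‖ * ‖u y‖) :=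
            mul_le_mul_of_nonneg_left (norm_cross3_le _ _) (norm_nonneg _)
        _ = (‖x - y‖ ^ 2)⁻¹ * (‖gradient ψ y‖ * ‖u y‖) := by rw [e1]
        _ ≤ (d ^ 2)⁻¹ * (‖gradient ψ y‖ * ‖u y‖) :=
            mul_le_mul_of_nonneg_right e2 (by positivity)
        _ = (d ^ 2)⁻¹ * g y := rfl
  -- measurability of the integrands
  have hmeas1 : ∀ x : E3, AEStronglyMeasurable
      (fun y : E3 => ((‖x - y‖ ^ 3)⁻¹ * ⟪u y, gradient ψ y⟫) • (x - y))
      (volume : Measure E3) := by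
    intro x
    have hc : Continuous fun y : E3 => x - y := continuous_const.sub continuous_id
    have m1 : AEStronglyMeasurable (fun y : E3 => (‖x - y‖ ^ 3)⁻¹)
        (volume : Measure E3) := ((hc.norm.pow 3).measurable.inv).aestronglyMeasurable
    have m2 : AEStronglyMeasurable (fun y : E3 => ⟪u y, gradient ψ y⟫)
        (volume : Measure E3) := hu.1.inner hgradc.aestronglyMeasurable
    exact continuous_smul.comp_aestronglyMeasurable₂ (m1.mul m2) hc.aestronglyMeasurable
  have hmeas2 : ∀ x : E3, AEStronglyMeasurable
      (fun y : E3 => cross3 ((‖x - y‖ ^ 3)⁻¹ • (x - y)) (cross3 (gradient ψ y) (u y)))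
      (volume : Measure E3) := by
    intro x
    have hc : Continuous fun y : E3 => x - y := continuous_const.sub continuous_id
    have m1 : AEStronglyMeasurable (fun y : E3 => (‖x - y‖ ^ 3)⁻¹)
        (volume : Measure E3) := ((hc.norm.pow 3).measurable.inv).aestronglyMeasurable
    have mK : AEStronglyMeasurable (fun y : E3 => (‖x - y‖ ^ 3)⁻¹ • (x - y))
        (volume : Measure E3) :=
      continuous_smul.comp_aestronglyMeasurable₂ m1 hc.aestronglyMeasurable
    have mw : AEStronglyMeasurable (fun y : E3 => cross3 (gradient ψ y) (u y))
        (volume : Measure E3) :=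
      continuous_cross3'.comp_aestronglyMeasurable₂ hgradc.aestronglyMeasurable hu.1
    exact continuous_cross3'.comp_aestronglyMeasurable₂ mK mw
  -- integrability
  have hint1 : ∀ x ∈ Metric.ball x0 ρ0, Integrable
      (fun y : E3 => ((‖x - y‖ ^ 3)⁻¹ * ⟪u y, gradient ψ y⟫) • (x - y))
      (volume : Measure E3) := fun x hx =>
    (hgint.const_mul ((d ^ 2)⁻¹)).mono' (hmeas1 x) (ae_of_all _ (hbound1 x hx))
  have hint2 : ∀ x ∈ Metric.ball x0 ρ0, Integrable
      (fun y : E3 => cross3 ((‖x - y‖ ^ 3)⁻¹ • (x - y)) (cross3 (gradient ψ y) (u y)))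
      (volume : Measure E3) := fun x hx =>
    (hgint.const_mul ((d ^ 2)⁻¹)).mono' (hmeas2 x) (ae_of_all _ (hbound2 x hx))
  refine ⟨fun x hx => ⟨hint1 x hx, hint2 x hx⟩, ?_⟩
  -- abbreviations for the L² norms
  set A : ℝ := (∫ y in Metric.ball x0 ρ, ‖gradient ψ y‖ ^ 2) ^ ((1 : ℝ) / 2) with hA_def
  set B : ℝ := (∫ y in Metric.ball x0 ρ, ‖u y‖ ^ 2) ^ ((1 : ℝ) / 2) with hB_def
  have hA0 : 0 ≤ A :=
    Real.rpow_nonneg (integral_nonneg fun y => by positivity) _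
  have hB0 : 0 ≤ B :=
    Real.rpow_nonneg (integral_nonneg fun y => by positivity) _
  -- Hölder
  have hHolder : ∫ y, g y ≤ A * B := by
    have hset : ∫ y in Metric.ball x0 ρ, g y = ∫ y, g y := by
      refine setIntegral_eq_integral_of_forall_compl_eq_zero fun y hy => ?_
      have : gradient ψ y = 0 := by
        by_contra h
        exact hy (hsupp' y h).1
      simp [hg_def, this]
    have hpq : Real.HolderConjugate 2 2 := Real.HolderConjugate.two_two
    have h2 : ENNReal.ofReal (2:ℝ) = 2 := by
      simp [ENNReal.ofReal_ofNat]
    have hMg' : MemLp (gradient ψ) (ENNReal.ofReal 2)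
        ((volume : Measure E3).restrict (Metric.ball x0 ρ)) := by
      rw [h2]; exact hMg.restrict _
    have hu' : MemLp u (ENNReal.ofReal 2)
        ((volume : Measure E3).restrict (Metric.ball x0 ρ)) := by
      rw [h2]; exact hu.restrict _
    have hHolder' := integral_mul_norm_le_Lp_mul_Lq hpq hMg' hu'
    have hrpow : ∀ t : ℝ, t ^ (2:ℝ) = t ^ (2:ℕ) := fun t => by
      rw [show (2:ℝ) = ((2:ℕ):ℝ) by norm_num, Real.rpow_natCast]
    simp only [hrpow] at hHolder'
    rw [← hset]
    exact hHolder'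
  -- Lipschitz estimate
  rw [lipschitzOnWith_iff_dist_le_mul]
  intro x hx x' hx'
  have hcoe : ((Real.toNNReal (C * A * B)) : ℝ) = C * A * B :=
    Real.coe_toNNReal _ (mul_nonneg (mul_nonneg hC.le hA0) hB0)
  rw [hcoe]
  -- pointwise Lipschitz bounds on the integrands
  have hdiff1 : ∀ y : E3,
      ‖((‖x - y‖ ^ 3)⁻¹ * ⟪u y, gradient ψ y⟫) • (x - y)
        - ((‖x' - y‖ ^ 3)⁻¹ * ⟪u y, gradient ψ y⟫) • (x' - y)‖
        ≤ L * ‖x - x'‖ * g y := by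
    intro y
    by_cases hy : gradient ψ y = 0
    · simp only [hy, inner_zero_right, mul_zero, zero_smul, sub_zero, norm_zero]
      positivity
    · obtain ⟨ha1, ha2⟩ := hK x hx y hy
      obtain ⟨hb1, hb2⟩ := hK x' hx' y hy
      have e : ((‖x - y‖ ^ 3)⁻¹ * ⟪u y, gradient ψ y⟫) • (x - y)
            - ((‖x' - y‖ ^ 3)⁻¹ * ⟪u y, gradient ψ y⟫) • (x' - y)
          = ⟪u y, gradient ψ y⟫ •
            ((‖x - y‖ ^ 3)⁻¹ • (x - y) - (‖x' - y‖ ^ 3)⁻¹ • (x' - y)) := by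
        module
      rw [e, norm_smul, Real.norm_eq_abs]
      have hker := kernel_lip hd (x - y) (x' - y) ha1 hb1 ha2 hb2
      have hsub : (x - y) - (x' - y) = x - x' := by abel
      rw [hsub] at hker
      have hinner : |⟪u y, gradient ψ y⟫| ≤ ‖u y‖ * ‖gradient ψ y‖ :=
        abs_real_inner_le_norm _ _
      calc |⟪u y, gradient ψ y⟫| * ‖(‖x - y‖ ^ 3)⁻¹ • (x - y) - (‖x' - y‖ ^ 3)⁻¹ • (x' - y)‖
          ≤ (‖u y‖ * ‖gradient ψ y‖) * (L * ‖x - x'‖) :=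
            mul_le_mul hinner hker (norm_nonneg _) (by positivity)
        _ = L * ‖x - x'‖ * g y := by rw [hg_def]; ring
  have hdiff2 : ∀ y : E3,
      ‖cross3 ((‖x - y‖ ^ 3)⁻¹ • (x - y)) (cross3 (gradient ψ y) (u y))
        - cross3 ((‖x' - y‖ ^ 3)⁻¹ • (x' - y)) (cross3 (gradient ψ y) (u y))‖
        ≤ L * ‖x - x'‖ * g y := by
    intro y
    by_cases hy : gradient ψ y = 0
    · simp only [hy, cross3_zero_left, cross3_zero_right, sub_zero, norm_zero]
      positivity
    · obtain ⟨ha1, ha2⟩ := hK x hx y hy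
      obtain ⟨hb1, hb2⟩ := hK x' hx' y hy
      have hker := kernel_lip hd (x - y) (x' - y) ha1 hb1 ha2 hb2
      have hsub : (x - y) - (x' - y) = x - x' := by abel
      rw [hsub] at hker
      rw [← cross3_sub_left]
      calc ‖cross3 ((‖x - y‖ ^ 3)⁻¹ • (x - y) - (‖x' - y‖ ^ 3)⁻¹ • (x' - y))
              (cross3 (gradient ψ y) (u y))‖
          ≤ ‖(‖x - y‖ ^ 3)⁻¹ • (x - y) - (‖x' - y‖ ^ 3)⁻¹ • (x' - y)‖
              * ‖cross3 (gradient ψ y) (u y)‖ := norm_cross3_le _ _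
        _ ≤ (L * ‖x - x'‖) * (‖gradient ψ y‖ * ‖u y‖) := by
            have h2' : ‖cross3 (gradient ψ y) (u y)‖ ≤ ‖gradient ψ y‖ * ‖u y‖ :=
              norm_cross3_le _ _
            have hLnn : (0:ℝ) ≤ L * ‖x - x'‖ := by positivity
            exact mul_le_mul hker h2' (norm_nonneg _) hLnn
        _ = L * ‖x - x'‖ * g y := by simp only [hg_def]
  -- norm of the integral differences
  have hgint' : Integrable (fun y => L * ‖x - x'‖ * g y) (volume : Measure E3) :=
    hgint.const_mul _
  have hI1 : ‖(∫ y : E3, ((‖x - y‖ ^ 3)⁻¹ * ⟪u y, gradient ψ y⟫) • (x - y))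
      - (∫ y : E3, ((‖x' - y‖ ^ 3)⁻¹ * ⟪u y, gradient ψ y⟫) • (x' - y))‖
      ≤ L * ‖x - x'‖ * ∫ y, g y := by
    rw [← integral_sub (hint1 x hx) (hint1 x' hx')]
    have := norm_integral_le_of_norm_le hgint' (ae_of_all _ hdiff1)
    calc ‖∫ y : E3, (((‖x - y‖ ^ 3)⁻¹ * ⟪u y, gradient ψ y⟫) • (x - y)
            - ((‖x' - y‖ ^ 3)⁻¹ * ⟪u y, gradient ψ y⟫) • (x' - y))‖
        ≤ ∫ y, L * ‖x - x'‖ * g y := this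
      _ = L * ‖x - x'‖ * ∫ y, g y := integral_const_mul _ _
  have hI2 : ‖(∫ y : E3, cross3 ((‖x - y‖ ^ 3)⁻¹ • (x - y)) (cross3 (gradient ψ y) (u y)))
      - (∫ y : E3, cross3 ((‖x' - y‖ ^ 3)⁻¹ • (x' - y)) (cross3 (gradient ψ y) (u y)))‖
      ≤ L * ‖x - x'‖ * ∫ y, g y := by
    rw [← integral_sub (hint2 x hx) (hint2 x' hx')]
    have := norm_integral_le_of_norm_le hgint' (ae_of_all _ hdiff2)
    calc ‖∫ y : E3, (cross3 ((‖x - y‖ ^ 3)⁻¹ • (x - y)) (cross3 (gradient ψ y) (u y))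
            - cross3 ((‖x' - y‖ ^ 3)⁻¹ • (x' - y)) (cross3 (gradient ψ y) (u y)))‖
        ≤ ∫ y, L * ‖x - x'‖ * g y := this
      _ = L * ‖x - x'‖ * ∫ y, g y := integral_const_mul _ _
  -- assemble
  have hGnn : 0 ≤ ∫ y, g y := integral_nonneg hgnonneg
  rw [dist_eq_norm]
  set I1 : E3 := ∫ y : E3, ((‖x - y‖ ^ 3)⁻¹ * ⟪u y, gradient ψ y⟫) • (x - y) with hI1_def
  set I1' : E3 := ∫ y : E3, ((‖x' - y‖ ^ 3)⁻¹ * ⟪u y, gradient ψ y⟫) • (x' - y) with hI1'_def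
  set I2 : E3 := ∫ y : E3, cross3 ((‖x - y‖ ^ 3)⁻¹ • (x - y)) (cross3 (gradient ψ y) (u y))
    with hI2_def
  set I2' : E3 := ∫ y : E3, cross3 ((‖x' - y‖ ^ 3)⁻¹ • (x' - y)) (cross3 (gradient ψ y) (u y))
    with hI2'_def
  have hsplit : harmCorr ψ u x - harmCorr ψ u x'
      = (4 * Real.pi)⁻¹ • (I1 - I1') - (4 * Real.pi)⁻¹ • (I2 - I2') := by
    simp only [harmCorr, hI1_def, hI1'_def, hI2_def, hI2'_def]
    module
  rw [hsplit]
  have hd_eq : dist x x' = ‖x - x'‖ := dist_eq_norm x x'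
  have hstep : ‖(4 * Real.pi)⁻¹ • (I1 - I1') - (4 * Real.pi)⁻¹ • (I2 - I2')‖
      ≤ (4 * Real.pi)⁻¹ * (L * ‖x - x'‖ * ∫ y, g y)
        + (4 * Real.pi)⁻¹ * (L * ‖x - x'‖ * ∫ y, g y) := by
    refine (norm_sub_le _ _).trans ?_
    rw [norm_smul, norm_smul, Real.norm_eq_abs, abs_of_pos hπ]
    exact add_le_add (mul_le_mul_of_nonneg_left hI1 hπ.le)
      (mul_le_mul_of_nonneg_left hI2 hπ.le)
  refine hstep.trans ?_
  have hfin1 : (4 * Real.pi)⁻¹ * (L * ‖x - x'‖ * ∫ y, g y)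
      + (4 * Real.pi)⁻¹ * (L * ‖x - x'‖ * ∫ y, g y)
      = C * (∫ y, g y) * ‖x - x'‖ := by rw [hC_def]; ring
  rw [hfin1]
  have hfin2 : C * (∫ y, g y) * ‖x - x'‖ ≤ C * (A * B) * ‖x - x'‖ :=
    mul_le_mul_of_nonneg_right (mul_le_mul_of_nonneg_left hHolder hC.le) (norm_nonneg _)
  refine hfin2.trans ?_
  rw [hd_eq]; ring_nf; exact le_refl _
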